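/- Let W(k) be a sequence of stochastic matrices and suppose there is ε > 0 such that for every k there exists m > k with all entries of Φ(m,k) = W(m-1)⋯W(k) at least ε. Let x(k) satisfy x(k+1) ≤ W(k)·x(k) entrywise and suppose x(k) is bounded from below. Then the sequence max_i x_i(k) - min_i x_i(k) converges to 0. -/
import Mathlib


open Matrix Finset Filter Topology

def Stochastic {n : ℕ} (W : Matrix (Fin n) (Fin n) ℝ) : Prop :=
  (∀ i j, 0 ≤ W i j) ∧ ∀ i, ∑ j, W i j = 1

noncomputable def vmax {n : ℕ} (hn : 0 < n) (x : Fin n → ℝ) : ℝ :=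
  Finset.univ.sup' ⟨⟨0, hn⟩, Finset.mem_univ _⟩ x

noncomputable def vmin {n : ℕ} (hn : 0 < n) (x : Fin n → ℝ) : ℝ :=
  Finset.univ.inf' ⟨⟨0, hn⟩, Finset.mem_univ _⟩ x

def Phi {n : ℕ} (W : ℕ → Matrix (Fin n) (Fin n) ℝ) (k : ℕ) : ℕ → Matrix (Fin n) (Fin n) ℝ
  | 0 => 1
  | j + 1 => W (k + j) * Phi W k j

lemma stoch_one {n : ℕ} : Stochastic (1 : Matrix (Fin n) (Fin n) ℝ) := by
  constructor
  · intro i j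
    by_cases h : i = j <;> simp [Matrix.one_apply, h]
  · intro i
    simp [Matrix.one_apply]

lemma stoch_mul {n : ℕ} {A B : Matrix (Fin n) (Fin n) ℝ} (hA : Stochastic A)
    (hB : Stochastic B) : Stochastic (A * B) := by
  constructor
  · intro i j
    rw [Matrix.mul_apply]
    exact Finset.sum_nonneg fun k _ => mul_nonneg (hA.1 i k) (hB.1 k j)
  · intro i
    simp only [Matrix.mul_apply]
    rw [Finset.sum_comm]
    simp [← Finset.mul_sum, hB.2, hA.2 i]

lemma stoch_Phi {n : ℕ} (W : ℕ → Matrix (Fin n) (Fin n) ℝ)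
    (hW : ∀ k, Stochastic (W k)) (k : ℕ) : ∀ j, Stochastic (Phi W k j)
  | 0 => stoch_one
  | j + 1 => stoch_mul (hW (k + j)) (stoch_Phi W hW k j)

lemma le_Phi_mulVec {n : ℕ} (W : ℕ → Matrix (Fin n) (Fin n) ℝ)
    (hW : ∀ k, Stochastic (W k)) (x : ℕ → Fin n → ℝ)
    (hx : ∀ k, x (k + 1) ≤ (W k).mulVec (x k)) (k : ℕ) :
    ∀ j, x (k + j) ≤ (Phi W k j).mulVec (x k)
  | 0 => by simp [Phi]
  | j + 1 => by
    have h1 := hx (k + j)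
    have h2 : (W (k + j)).mulVec (x (k + j)) ≤
        (W (k + j)).mulVec ((Phi W k j).mulVec (x k)) := by
      intro i
      simp only [Matrix.mulVec, dotProduct]
      exact Finset.sum_le_sum fun l _ =>
        mul_le_mul_of_nonneg_left (le_Phi_mulVec W hW x hx k j l) ((hW (k + j)).1 i l)
    have h3 : (W (k + j)).mulVec ((Phi W k j).mulVec (x k)) = (Phi W k (j + 1)).mulVec (x k) := by
      rw [Phi, ← Matrix.mulVec_mulVec]
    calc x (k + (j + 1)) = x ((k + j) + 1) := by ring_nf
    _ ≤ (W (k + j)).mulVec (x (k + j)) := h1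
    _ ≤ _ := h2
    _ = _ := by rw [h3]

lemma vmax_mulVec_le {n : ℕ} (hn : 0 < n) {A : Matrix (Fin n) (Fin n) ℝ}
    (hA : Stochastic A) (y : Fin n → ℝ) : vmax hn (A.mulVec y) ≤ vmax hn y := by
  apply Finset.sup'_le
  intro i _
  have : A.mulVec y i ≤ ∑ j, A i j * vmax hn y := by
    simp only [Matrix.mulVec, dotProduct]
    exact Finset.sum_le_sum fun j _ =>
      mul_le_mul_of_nonneg_left (Finset.le_sup' y (Finset.mem_univ j)) (hA.1 i j)
  calc A.mulVec y i ≤ ∑ j, A i j * vmax hn y := this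
  _ = vmax hn y := by rw [← Finset.sum_mul, hA.2 i, one_mul]

lemma vmax_mono {n : ℕ} (hn : 0 < n) {u v : Fin n → ℝ} (h : u ≤ v) :
    vmax hn u ≤ vmax hn v :=
  Finset.sup'_le _ _ fun i _ => (h i).trans (Finset.le_sup' v (Finset.mem_univ i))

lemma vmin_le_vmax {n : ℕ} (hn : 0 < n) (y : Fin n → ℝ) : vmin hn y ≤ vmax hn y :=
  (Finset.inf'_le y (Finset.mem_univ ⟨0, hn⟩)).trans
    (Finset.le_sup' y (Finset.mem_univ ⟨0, hn⟩))

lemma contraction {n : ℕ} (hn : 0 < n) {A : Matrix (Fin n) (Fin n) ℝ}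
    (hA : Stochastic A) {ε : ℝ} (hε : ∀ i j, ε ≤ A i j) (y : Fin n → ℝ) :
    vmax hn (A.mulVec y) ≤ vmax hn y + ε * (vmin hn y - vmax hn y) := by
  apply Finset.sup'_le
  intro i _
  obtain ⟨j₀, _, hj₀⟩ := Finset.exists_mem_eq_inf' ⟨⟨0, hn⟩, Finset.mem_univ _⟩ y
  have hmm : vmin hn y - vmax hn y ≤ 0 := sub_nonpos.mpr (vmin_le_vmax hn y)
  have key : ∑ j, A i j * (y j - vmax hn y) ≤ ε * (vmin hn y - vmax hn y) := by
    have : ∑ j, A i j * (y j - vmax hn y) ≤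
        ∑ j, (if j = j₀ then ε * (vmin hn y - vmax hn y) else 0) := by
      apply Finset.sum_le_sum
      intro j _
      by_cases h : j = j₀
      · subst h
        simp only [if_pos rfl]
        have hy : y j = vmin hn y := hj₀.symm
        rw [hy]
        exact mul_le_mul_of_nonpos_right (hε i j) hmm
      · simp only [if_neg h]
        apply mul_nonpos_of_nonneg_of_nonpos (hA.1 i j)
        exact sub_nonpos.mpr (Finset.le_sup' y (Finset.mem_univ j))
    simpa using this
  have expand : A.mulVec y i = (∑ j, A i j * (y j - vmax hn y)) + vmax hn y := by
    simp only [Matrix.mulVec, dotProduct, mul_sub]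
    rw [Finset.sum_sub_distrib, ← Finset.sum_mul, hA.2 i, one_mul]
    ring
  rw [expand]
  linarith

theorem stmt11 {n : ℕ} (hn : 0 < n) (W : ℕ → Matrix (Fin n) (Fin n) ℝ)
    (hW : ∀ k, Stochastic (W k)) (ε : ℝ) (hε : 0 < ε)
    (hΦ : ∀ k, ∃ m > k, ∀ i j, ε ≤ Phi W k (m - k) i j)
    (x : ℕ → Fin n → ℝ) (hx : ∀ k, x (k + 1) ≤ (W k).mulVec (x k))
    (hbdd : ∃ c, ∀ k i, c ≤ x k i) :
    Tendsto (fun k => vmax hn (x k) - vmin hn (x k)) atTop (𝓝 0) := by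
  obtain ⟨c, hc⟩ := hbdd
  -- vmax is antitone
  have hanti : Antitone fun k => vmax hn (x k) := by
    apply antitone_nat_of_succ_le
    intro k
    exact (vmax_mono hn (hx k)).trans (vmax_mulVec_le hn (hW k) (x k))
  have hbb : BddBelow (Set.range fun k => vmax hn (x k)) := by
    refine ⟨c, ?_⟩
    rintro _ ⟨k, rfl⟩
    exact le_trans (hc k ⟨0, hn⟩) (Finset.le_sup' (x k) (Finset.mem_univ _))
  set L := ⨅ k, vmax hn (x k) with hL
  have htend : Tendsto (fun k => vmax hn (x k)) atTop (𝓝 L) :=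
    tendsto_atTop_ciInf hanti hbb
  have hLle : ∀ k, L ≤ vmax hn (x k) := fun k => ciInf_le hbb k
  -- key inequality
  have hkey : ∀ k, vmax hn (x k) - vmin hn (x k) ≤ (vmax hn (x k) - L) / ε := by
    intro k
    obtain ⟨m, hm, hent⟩ := hΦ k
    have hmk : k + (m - k) = m := Nat.add_sub_cancel' hm.le
    have h1 : x m ≤ (Phi W k (m - k)).mulVec (x k) := by
      have := le_Phi_mulVec W hW x hx k (m - k); rwa [hmk] at this
    have h2 : vmax hn (x m) ≤ vmax hn (x k) + ε * (vmin hn (x k) - vmax hn (x k)) :=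
      (vmax_mono hn h1).trans (contraction hn (stoch_Phi W hW k (m - k)) hent (x k))
    have h3 := hLle m
    rw [le_div_iff₀ hε]
    nlinarith
  apply squeeze_zero
  · intro k
    exact sub_nonneg.mpr (vmin_le_vmax hn (x k))
  · exact hkey
  · have : Tendsto (fun k => (vmax hn (x k) - L) / ε) atTop (𝓝 ((L - L) / ε)) :=
      (htend.sub tendsto_const_nhds).div_const ε
    simpa using this
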